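/- Let q be a prime power and k ≥ 2. If C is a minimal linear code of dimension k over GF(q) with minimum distance d, then d ≥ (q-1)(k-1) + 1. -/

import Mathlib

open Finset MvPolynomial

lemma my_blocking_lemma {F : Type} [Field F] [Fintype F] [DecidableEq F]
    {ι : Type} [DecidableEq ι] (m : ℕ) (hm : 1 ≤ m)
    (s : Finset ι) (b : ι → Fin m → F)
    (hb : ∀ u : Fin m → F, u ≠ 0 → ∀ α : F, ∃ i ∈ s, ∑ j, u j * b i j = α) :
    m * (Fintype.card F - 1) + 1 ≤ s.card := by
  classical
  have hq2 : 1 < Fintype.card F := Fintype.one_lt_card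
  -- pick a point
  have hu1 : (Pi.single (⟨0, hm⟩ : Fin m) (1 : F) : Fin m → F) ≠ 0 := by
    intro h
    have := congrFun h ⟨0, hm⟩
    simp at this
  obtain ⟨i0, hi0, -⟩ := hb _ hu1 0
  by_contra hcon
  push_neg at hcon
  have hcard : (s.erase i0).card < (Fintype.card F - 1) * m := by
    have h1 : 1 ≤ s.card := Finset.card_pos.mpr ⟨i0, hi0⟩
    have := Finset.card_erase_of_mem hi0
    have hm1 : 1 ≤ (Fintype.card F - 1) * m := by
      have : 1 * 1 ≤ (Fintype.card F - 1) * m := Nat.mul_le_mul (by omega) hm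
      omega
    have hcomm : m * (Fintype.card F - 1) = (Fintype.card F - 1) * m := Nat.mul_comm _ _
    omega
  set P : MvPolynomial (Fin m) F :=
    ∏ i ∈ s.erase i0, (1 - ∑ j, MvPolynomial.C (b i j - b i0 j) * MvPolynomial.X j) with hP
  have heval : ∀ u : Fin m → F,
      MvPolynomial.eval u P = ∏ i ∈ s.erase i0, (1 - ∑ j, (b i j - b i0 j) * u j) := by
    intro u
    simp [hP]
  have hfac : ∀ i : ι,
      (1 - ∑ j, MvPolynomial.C (b i j - b i0 j) * MvPolynomial.X j :
        MvPolynomial (Fin m) F).totalDegree ≤ 1 := by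
    intro i
    rw [sub_eq_add_neg, ← Finset.sum_neg_distrib]
    refine le_trans (MvPolynomial.totalDegree_add _ _) (max_le (by simp) ?_)
    refine MvPolynomial.totalDegree_finsetSum_le ?_
    intro j _
    rw [neg_mul_eq_neg_mul, ← MvPolynomial.C_neg]
    refine le_trans (MvPolynomial.totalDegree_mul _ _) ?_
    simp only [MvPolynomial.totalDegree_C, MvPolynomial.totalDegree_X, zero_add, le_refl]
  have hdeg : P.totalDegree < (Fintype.card F - 1) * Fintype.card (Fin m) := by
    have h1 : P.totalDegree ≤ (s.erase i0).card := by
      rw [hP]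
      refine (MvPolynomial.totalDegree_finset_prod _ _).trans ?_
      calc ∑ i ∈ s.erase i0,
            (1 - ∑ j, MvPolynomial.C (b i j - b i0 j) * MvPolynomial.X j :
              MvPolynomial (Fin m) F).totalDegree
          ≤ ∑ _i ∈ s.erase i0, 1 := Finset.sum_le_sum (fun i _ => hfac i)
        _ = (s.erase i0).card := by simp
    refine lt_of_le_of_lt h1 ?_
    simpa using hcard
  have hsum := MvPolynomial.sum_eval_eq_zero P hdeg
  have heval0 : MvPolynomial.eval (0 : Fin m → F) P = 1 := by
    rw [heval]; simp
  have hevalne : ∀ u : Fin m → F, u ≠ 0 → MvPolynomial.eval u P = 0 := by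
    intro u hu
    obtain ⟨i, hi, hiv⟩ := hb u hu (1 + ∑ j, u j * b i0 j)
    have hii0 : i ≠ i0 := by
      intro h; subst h
      have : (1 : F) = 0 := by linear_combination -hiv
      simp at this
    rw [heval]
    refine Finset.prod_eq_zero (Finset.mem_erase.mpr ⟨hii0, hi⟩) ?_
    have : ∑ j, (b i j - b i0 j) * u j = 1 := by
      have expand : ∑ j, (b i j - b i0 j) * u j
          = (∑ j, u j * b i j) - ∑ j, u j * b i0 j := by
        rw [← Finset.sum_sub_distrib]
        congr 1; funext j; ring
      rw [expand, hiv]; ring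
    rw [this]; ring
  have : (1 : F) = 0 := by
    rw [← heval0, ← hsum]
    rw [Finset.sum_eq_single_of_mem (0 : Fin m → F) (Finset.mem_univ _)]
    intro u _ hu
    exact hevalne u hu
  simp at this

set_option synthInstance.maxHeartbeats 1000000 in
set_option maxHeartbeats 1000000 in
theorem stmt_10 {F : Type} [Field F] [Fintype F] [DecidableEq F]
    (q n k : ℕ) (hq : Fintype.card F = q) (hk : 2 ≤ k)
    (C : Submodule F (Fin n → F)) (hdim : Module.finrank F C = k)
    (hmin : ∀ c ∈ C, c ≠ 0 → ∀ c' ∈ C, c' ≠ 0 →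
      (∀ i, c' i ≠ 0 → c i ≠ 0) → ∃ lam : F, c' = lam • c) :
    ∀ c ∈ C, c ≠ 0 → (q - 1) * (k - 1) + 1 ≤ hammingNorm c := by
  classical
  intro c hc hc0
  set S : Finset (Fin n) := Finset.univ.filter (fun i => c i ≠ 0) with hS
  have hnorm : hammingNorm c = S.card := by
    simp [hammingNorm, hS]
  set cc : C := ⟨c, hc⟩ with hcc
  have hcc0 : cc ≠ 0 := by
    intro h
    exact hc0 (by simpa [hcc, Submodule.mk_eq_zero] using h)
  set L : Submodule F C := Submodule.span F {cc} with hL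
  obtain ⟨W, hW⟩ := Submodule.exists_isCompl L
  have hL1 : Module.finrank F L = 1 := finrank_span_singleton hcc0
  have hWr : Module.finrank F W = k - 1 := by
    have := Submodule.finrank_add_eq_of_isCompl hW
    rw [hL1, hdim] at this
    omega
  set m : ℕ := Module.finrank F W with hm
  have hm1 : 1 ≤ m := by omega
  haveI : Module.Free F (↥W) := Module.Free.of_divisionRing F ↥W
  let β := Module.finBasis F W
  set b : Fin n → Fin m → F :=
    fun i j => (c i)⁻¹ * (((β j : W) : C) : Fin n → F) i with hb
  have hblock : ∀ u : Fin m → F, u ≠ 0 → ∀ α : F, ∃ i ∈ S, ∑ j, u j * b i j = α := by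
    intro u hu α
    set w : W := ∑ j, u j • β j with hw
    have hw0 : w ≠ 0 := by
      intro h
      apply hu
      funext j
      exact (Fintype.linearIndependent_iff (v := β)).mp β.linearIndependent u (hw.symm.trans h) j
    set x : C := (-α) • cc + (w : C) with hx
    have hxL : x ∉ L := by
      intro hxL
      have hwL : (w : C) ∈ L := by
        have : (w : C) = x + α • cc := by
          rw [hx]; module
        rw [this]
        exact L.add_mem hxL (L.smul_mem _ (Submodule.mem_span_singleton_self cc))
      have : (w : C) ∈ L ⊓ W := ⟨hwL, w.2⟩
      rw [hW.inf_eq_bot] at this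
      exact hw0 (Subtype.ext (by simpa using this))
    have hx0 : x ≠ 0 := by
      intro h
      exact hxL (h ▸ L.zero_mem)
    have hxv0 : (x : Fin n → F) ≠ 0 := by
      intro h
      exact hx0 (Subtype.ext h)
    have key : ∃ i ∈ S, (x : Fin n → F) i = 0 := by
      by_contra hkey
      push_neg at hkey
      obtain ⟨lam, hlam⟩ := hmin (x : Fin n → F) x.2 hxv0 c hc hc0
        (fun i hci => hkey i (by simp [hS, hci]))
      have hlam0 : lam ≠ 0 := by
        intro h
        exact hc0 (by simpa [h] using hlam)
      apply hxL
      rw [hL]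
      rw [Submodule.mem_span_singleton]
      refine ⟨lam⁻¹, ?_⟩
      apply Subtype.ext
      have : (x : Fin n → F) = lam⁻¹ • c := by
        rw [hlam]
        rw [smul_smul, inv_mul_cancel₀ hlam0, one_smul]
      simpa [hcc] using this.symm
    obtain ⟨i, hiS, hxi⟩ := key
    have hci : c i ≠ 0 := by
      simpa [hS] using hiS
    refine ⟨i, hiS, ?_⟩
    have hxvi : (x : Fin n → F) i = -α * c i + ∑ j, u j * (((β j : W) : C) : Fin n → F) i := by
      rw [hx]
      push_cast
      simp only [Submodule.coe_add, Submodule.coe_smul, Pi.add_apply, Pi.smul_apply,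
        smul_eq_mul]
      congr 1
      have : ((w : C) : Fin n → F) = ∑ j, u j • (((β j : W) : C) : Fin n → F) := by
        rw [hw]
        push_cast
        simp
      rw [this]
      simp
    have hsum : ∑ j, u j * (((β j : W) : C) : Fin n → F) i = α * c i := by
      have := hxvi
      rw [hxi] at this
      linear_combination -this
    calc ∑ j, u j * b i j = (c i)⁻¹ * ∑ j, u j * (((β j : W) : C) : Fin n → F) i := by
          rw [Finset.mul_sum]
          congr 1; funext j
          rw [hb]; ring
      _ = α := by rw [hsum]; field_simp
  have hfin := my_blocking_lemma m hm1 S b hblock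
  have h2 : (q - 1) * (k - 1) = m * (Fintype.card F - 1) := by
    rw [hWr, hq, Nat.mul_comm]
  rw [hnorm, h2]
  exact hfin
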